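/- Let p, n be integers with −1 ≤ n < p. Then there exists a nonzero real polynomial θ of degree at most p on [−1, 1] that is L²(−1,1)-orthogonal to every polynomial of degree at most n and satisfies the equality |θ(−1)|² = ((p−n)(p+n+2)/2) · ∫_{−1}^{1} θ(x)² dx. -/

import Mathlib

open MeasureTheory Polynomial

noncomputable def rodP (k : ℕ) : Polynomial ℝ := derivative^[k] (((X : Polynomial ℝ)^2 - 1)^k)

lemma polyII (f : Polynomial ℝ) (a b : ℝ) :
    IntervalIntegrable (fun x => f.eval x) volume a b :=
  f.continuous.intervalIntegrable a b

lemma integral_derivative (f : Polynomial ℝ) (a b : ℝ) :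
    ∫ x in a..b, (derivative f).eval x = f.eval b - f.eval a := by
  apply intervalIntegral.integral_eq_sub_of_hasDerivAt
  · exact fun x _ => f.hasDerivAt x
  · exact polyII _ a b

lemma parts (u v : Polynomial ℝ) :
    ∫ x in (-1:ℝ)..1, (derivative u).eval x * v.eval x =
      u.eval 1 * v.eval 1 - u.eval (-1) * v.eval (-1)
        - ∫ x in (-1:ℝ)..1, u.eval x * (derivative v).eval x := by
  have h := integral_derivative (u * v) (-1) 1
  rw [derivative_mul] at h
  have hsplit : ∫ x in (-1:ℝ)..1, (derivative u * v + u * derivative v).eval x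
      = (∫ x in (-1:ℝ)..1, (derivative u).eval x * v.eval x)
        + ∫ x in (-1:ℝ)..1, u.eval x * (derivative v).eval x := by
    simp only [eval_add, eval_mul]
    exact intervalIntegral.integral_add
      ((((derivative u).continuous).mul v.continuous).intervalIntegrable _ _)
      ((u.continuous.mul (derivative v).continuous).intervalIntegrable _ _)
  rw [hsplit] at h
  simp only [eval_mul] at h
  linarith

lemma rodP_dvd (k : ℕ) : ∀ j ≤ k, ∃ g : Polynomial ℝ,
    derivative^[j] (((X : Polynomial ℝ)^2 - 1)^k)
      = ((X : Polynomial ℝ)^2 - 1)^(k - j) * g := by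
  intro j
  induction j with
  | zero => exact fun _ => ⟨1, by simp⟩
  | succ j ih =>
    intro hj
    obtain ⟨g, hg⟩ := ih (by omega)
    set m := k - (j + 1) with hm
    have hkj : k - j = m + 1 := by omega
    refine ⟨C ((m : ℝ) + 1) * (C 2 * X) * g + ((X : Polynomial ℝ)^2 - 1) * derivative g, ?_⟩
    rw [Function.iterate_succ_apply', hg, hkj, derivative_mul, derivative_pow]
    have hd : derivative (((X : Polynomial ℝ)^2 - 1)) = C 2 * X := by
      simp [derivative_sub, derivative_X_pow]
      rw [← C_1, ← C_add]
      norm_num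
    rw [hd]
    push_cast
    ring

lemma rodP_boundary {k j : ℕ} (hj : j < k) {x : ℝ} (hx : x = 1 ∨ x = -1) :
    (derivative^[j] (((X : Polynomial ℝ)^2 - 1)^k)).eval x = 0 := by
  obtain ⟨g, hg⟩ := rodP_dvd k j hj.le
  have hx2 : x ^ 2 - 1 = 0 := by rcases hx with h | h <;> rw [h] <;> ring
  rw [hg, eval_mul, eval_pow, eval_sub, eval_pow, eval_one, eval_X, hx2,
    zero_pow (by omega), zero_mul]

lemma rodP_parts (k : ℕ) (q : Polynomial ℝ) : ∀ j ≤ k,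
    ∫ x in (-1:ℝ)..1, (rodP k).eval x * q.eval x
      = (-1:ℝ)^j * ∫ x in (-1:ℝ)..1,
          (derivative^[k - j] (((X : Polynomial ℝ)^2 - 1)^k)).eval x
            * (derivative^[j] q).eval x := by
  intro j
  induction j with
  | zero => simp [rodP]
  | succ j ih =>
    intro hj
    rw [ih (by omega)]
    have hk : k - j = (k - (j+1)) + 1 := by omega
    have hp := parts (derivative^[k - (j+1)] (((X : Polynomial ℝ)^2 - 1)^k))
      (derivative^[j] q)
    simp only [← Function.iterate_succ_apply', Nat.succ_eq_add_one] at hp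
    rw [← hk] at hp
    rw [hp, rodP_boundary (by omega : k - (j+1) < k) (Or.inl rfl),
      rodP_boundary (by omega : k - (j+1) < k) (Or.inr rfl)]
    ring

lemma rodP_ortho (k : ℕ) (q : Polynomial ℝ) (hq : q.natDegree < k) :
    ∫ x in (-1:ℝ)..1, (rodP k).eval x * q.eval x = 0 := by
  rw [rodP_parts k q k le_rfl, Polynomial.iterate_derivative_eq_zero hq]
  simp

lemma baseDeg (k : ℕ) : (((X : Polynomial ℝ)^2 - 1)^k).natDegree = 2 * k := by
  rw [natDegree_pow]
  rw [show ((X : Polynomial ℝ)^2 - 1) = X^2 - C 1 by rw [C_1]]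
  rw [natDegree_X_pow_sub_C]
  ring

lemma baseMonic (k : ℕ) : (((X : Polynomial ℝ)^2 - 1)^k).Monic := by
  apply Monic.pow
  rw [show ((X : Polynomial ℝ)^2 - 1) = X^2 - C 1 by rw [C_1]]
  exact monic_X_pow_sub_C _ two_ne_zero

lemma rodP_natDegree (k : ℕ) : (rodP k).natDegree ≤ k := by
  have := Polynomial.natDegree_iterate_derivative (((X : Polynomial ℝ)^2 - 1)^k) k
  rw [baseDeg] at this
  rw [rodP]
  omega

lemma rodP_top (k : ℕ) : derivative^[k] (rodP k) = C (((2*k).factorial : ℝ)) := by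
  rw [rodP, ← Function.iterate_add_apply]
  have h0 : (derivative^[k + k] (((X : Polynomial ℝ)^2 - 1)^k)).natDegree = 0 := by
    have := Polynomial.natDegree_iterate_derivative (((X : Polynomial ℝ)^2 - 1)^k) (k+k)
    rw [baseDeg] at this
    omega
  rw [Polynomial.eq_C_of_natDegree_le_zero h0.le, Polynomial.coeff_iterate_derivative]
  congr 1
  have hcoeff : (((X : Polynomial ℝ)^2 - 1)^k).coeff (0 + (k + k)) = 1 := by
    have := (baseMonic k).coeff_natDegree
    rw [baseDeg] at this
    rw [show 0 + (k + k) = 2 * k by ring, this]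
  rw [hcoeff]
  simp [← two_mul, Nat.descFactorial_self]

lemma contI (k : ℕ) : IntervalIntegrable (fun x : ℝ => (1 - x^2)^k) volume (-1) 1 := by
  apply Continuous.intervalIntegrable
  continuity

lemma I_rec (k : ℕ) :
    (2*(k:ℝ)+3) * ∫ x in (-1:ℝ)..1, (1-x^2)^(k+1)
      = (2*(k:ℝ)+2) * ∫ x in (-1:ℝ)..1, (1-x^2)^k := by
  have hds : ∀ x : ℝ, HasDerivAt (fun x : ℝ => x * (1-x^2)^(k+1))
      ((2*(k:ℝ)+3) * (1-x^2)^(k+1) - (2*(k:ℝ)+2) * (1-x^2)^k) x := by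
    intro x
    have h1 : HasDerivAt (fun x : ℝ => 1 - x^2) (-(2*x)) x := by
      simpa using ((hasDerivAt_pow 2 x).const_sub 1)
    have h2 := ((hasDerivAt_id x).mul (h1.pow (k+1)))
    refine h2.congr_deriv ?_
    simp only [id_eq, Nat.add_sub_cancel, Pi.pow_apply]
    push_cast
    rw [pow_succ (1 - x^2) k]
    ring
  have hint : ∫ x in (-1:ℝ)..1,
      ((2*(k:ℝ)+3) * (1-x^2)^(k+1) - (2*(k:ℝ)+2) * (1-x^2)^k) = 0 := by
    rw [intervalIntegral.integral_eq_sub_of_hasDerivAt (fun x _ => hds x)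
      (((contI (k+1)).const_mul _).sub ((contI k).const_mul _))]
    norm_num
  rw [intervalIntegral.integral_sub ((contI (k+1)).const_mul _) ((contI k).const_mul _),
    intervalIntegral.integral_const_mul, intervalIntegral.integral_const_mul] at hint
  linarith

lemma I_val (k : ℕ) :
    ((2*k+1).factorial : ℝ) * ∫ x in (-1:ℝ)..1, (1-x^2)^k
      = 2 * 4^k * ((k.factorial : ℝ))^2 := by
  induction k with
  | zero => norm_num
  | succ k ih =>
    have hrec := I_rec k
    have hfac : ((2*(k+1)+1).factorial : ℝ)
        = (2*(k:ℝ)+3) * (2*(k:ℝ)+2) * ((2*k+1).factorial : ℝ) := by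
      rw [show 2*(k+1)+1 = (2*k+1) + 1 + 1 by ring, Nat.factorial_succ, Nat.factorial_succ]
      push_cast
      ring
    rw [hfac, Nat.factorial_succ k]
    push_cast
    linear_combination (2*(k:ℝ)+2) * ((2*k+1).factorial : ℝ) * hrec
      + (2*(k:ℝ)+2)^2 * ih

lemma rodP_norm (k : ℕ) :
    ∫ x in (-1:ℝ)..1, ((rodP k).eval x)^2
      = ((2*k).factorial : ℝ) * ∫ x in (-1:ℝ)..1, (1-x^2)^k := by
  have h := rodP_parts k (rodP k) k le_rfl
  rw [rodP_top, Nat.sub_self, Function.iterate_zero_apply] at h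
  have heq : ∀ x : ℝ, eval x (((X : Polynomial ℝ)^2 - 1)^k)
      * eval x (C (((2*k).factorial : ℝ)))
      = (-1:ℝ)^k * (((2*k).factorial : ℝ) * (1-x^2)^k) := by
    intro x
    rw [eval_C, eval_pow, eval_sub, eval_pow, eval_one, eval_X,
      show (x^2 - 1) = (-1) * (1 - x^2) by ring, mul_pow]
    ring
  rw [intervalIntegral.integral_congr (fun x _ => heq x),
    intervalIntegral.integral_const_mul, intervalIntegral.integral_const_mul] at h
  have hsq : ∀ x : ℝ, eval x (rodP k) * eval x (rodP k) = ((rodP k).eval x)^2 := by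
    intro x; ring
  rw [intervalIntegral.integral_congr (fun x _ => hsq x)] at h
  rw [h, ← mul_assoc, ← mul_assoc, ← mul_pow]
  norm_num

lemma rodP_eval_neg_one (k : ℕ) :
    (rodP k).eval (-1) = (-2)^k * (k.factorial : ℝ) := by
  have hfac : ((X : Polynomial ℝ)^2 - 1)^k = (X - C 1)^k * (X + C 1)^k := by
    rw [← mul_pow]
    ring_nf
    rw [C_1]
    ring
  rw [rodP, hfac, Polynomial.iterate_derivative_mul, eval_finset_sum]
  rw [Finset.sum_eq_single_of_mem k (Finset.mem_range.mpr (Nat.lt_succ_self k))]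
  · rw [Nat.choose_self, one_smul, Nat.sub_self, Function.iterate_zero_apply,
      Polynomial.iterate_derivative_X_add_pow, Nat.sub_self, pow_zero,
      Nat.descFactorial_self, eval_mul, eval_pow, eval_sub, eval_X, eval_C,
      eval_smul, eval_one, nsmul_eq_mul, mul_one]
    norm_num
  · intro i hi hik
    rw [Polynomial.iterate_derivative_X_add_pow]
    have hki : 0 < k - i := by
      simp only [Finset.mem_range] at hi
      omega
    rw [eval_smul, eval_mul, eval_smul, eval_pow, eval_add, eval_X, eval_C]
    norm_num [zero_pow hki.ne']

lemma rodP_eval_ne (k : ℕ) : (rodP k).eval (-1) ≠ 0 := by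
  rw [rodP_eval_neg_one]
  positivity

lemma rodP_key (k : ℕ) :
    ((rodP k).eval (-1))^2
      = (2*(k:ℝ)+1)/2 * ∫ x in (-1:ℝ)..1, ((rodP k).eval x)^2 := by
  rw [rodP_eval_neg_one, rodP_norm]
  have h := I_val k
  have hfac : ((2*k+1).factorial : ℝ) = (2*(k:ℝ)+1) * ((2*k).factorial : ℝ) := by
    rw [Nat.factorial_succ]
    push_cast
    ring
  rw [hfac] at h
  have hsq : ((-2:ℝ)^k)^2 = 4^k := by
    rw [← pow_mul, mul_comm k 2, pow_mul]
    norm_num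
  rw [mul_pow, hsq]
  linear_combination (-1/2) * h

lemma rodP_cross {j k : ℕ} (h : j ≠ k) :
    ∫ x in (-1:ℝ)..1, (rodP j).eval x * (rodP k).eval x = 0 := by
  rcases lt_or_gt_of_ne h with hlt | hgt
  · have h0 := rodP_ortho k (rodP j) (lt_of_le_of_lt (rodP_natDegree j) hlt)
    rw [← h0]
    exact intervalIntegral.integral_congr (fun x _ => by ring)
  · exact rodP_ortho j (rodP k) (lt_of_le_of_lt (rodP_natDegree k) hgt)

lemma sum_odd (m : ℕ) : ∑ k ∈ Finset.range m, (2*(k:ℝ)+1) = (m:ℝ)^2 := by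
  induction m with
  | zero => simp
  | succ m ih =>
    rw [Finset.sum_range_succ, ih]
    push_cast
    ring


noncomputable def cP (k : ℕ) : ℝ := ((2*(k:ℝ)+1)/2) / ((rodP k).eval (-1))

noncomputable def thetaP (N P : ℕ) : Polynomial ℝ :=
  ∑ k ∈ Finset.Ico N (P+1), C (cP k) * rodP k

lemma polyII2 (f g : Polynomial ℝ) :
    IntervalIntegrable (fun x => f.eval x * g.eval x) volume (-1) 1 :=
  (f.continuous.mul g.continuous).intervalIntegrable _ _

lemma thetaP_eval (N P : ℕ) :
    (thetaP N P).eval (-1) = ∑ k ∈ Finset.Ico N (P+1), (2*(k:ℝ)+1)/2 := by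
  rw [thetaP, eval_finset_sum]
  refine Finset.sum_congr rfl fun k _ => ?_
  rw [eval_mul, eval_C, cP]
  field_simp [rodP_eval_ne k]

lemma thetaP_ortho (N P : ℕ) (q : Polynomial ℝ) (hq : q.natDegree < N) :
    ∫ x in (-1:ℝ)..1, (thetaP N P).eval x * q.eval x = 0 := by
  have hfun : ∀ x : ℝ, (thetaP N P).eval x * q.eval x
      = ∑ k ∈ Finset.Ico N (P+1), cP k * ((rodP k).eval x * q.eval x) := by
    intro x
    rw [thetaP, eval_finset_sum, Finset.sum_mul]
    exact Finset.sum_congr rfl fun k _ => by rw [eval_mul, eval_C]; ring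
  rw [intervalIntegral.integral_congr (fun x _ => hfun x),
    intervalIntegral.integral_finset_sum (fun k _ => (polyII2 _ q).const_mul (cP k))]
  refine Finset.sum_eq_zero fun k hk => ?_
  have hk' : N ≤ k := (Finset.mem_Ico.mp hk).1
  rw [intervalIntegral.integral_const_mul, rodP_ortho k q (by omega), mul_zero]

lemma thetaP_diag (j : ℕ) :
    cP j * cP j * ∫ x in (-1:ℝ)..1, (rodP j).eval x * (rodP j).eval x
      = (2*(j:ℝ)+1)/2 := by
  have hsqint : ∫ x in (-1:ℝ)..1, (rodP j).eval x * (rodP j).eval x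
      = ∫ x in (-1:ℝ)..1, ((rodP j).eval x)^2 :=
    intervalIntegral.integral_congr (fun x _ => by ring)
  rw [hsqint]
  have hkey := rodP_key j
  have hne := rodP_eval_ne j
  have ha : (2*(j:ℝ)+1)/2 ≠ 0 := by positivity
  have hIne : (∫ x in (-1:ℝ)..1, ((rodP j).eval x)^2) ≠ 0 := by
    intro h0
    rw [h0, mul_zero] at hkey
    exact hne (by nlinarith [sq_nonneg ((rodP j).eval (-1))])
  rw [cP, div_mul_div_comm, ← pow_two ((rodP j).eval (-1)), hkey]
  field_simp

lemma thetaP_sq (N P : ℕ) :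
    ∫ x in (-1:ℝ)..1, ((thetaP N P).eval x)^2
      = ∑ k ∈ Finset.Ico N (P+1), (2*(k:ℝ)+1)/2 := by
  have hexp : ∀ x : ℝ, ((thetaP N P).eval x)^2
      = ∑ j ∈ Finset.Ico N (P+1), ∑ k ∈ Finset.Ico N (P+1),
          cP j * cP k * ((rodP j).eval x * (rodP k).eval x) := by
    intro x
    rw [thetaP, eval_finset_sum, sq, Finset.sum_mul_sum]
    refine Finset.sum_congr rfl fun j _ => Finset.sum_congr rfl fun k _ => ?_
    rw [eval_mul, eval_mul, eval_C, eval_C]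
    ring
  have hInt : ∀ j ∈ Finset.Ico N (P+1), IntervalIntegrable
      (fun x => ∑ k ∈ Finset.Ico N (P+1),
        cP j * cP k * ((rodP j).eval x * (rodP k).eval x)) volume (-1) 1 :=
    fun j _ => (continuous_finset_sum _ (fun k _ =>
      (continuous_const.mul ((rodP j).continuous.mul
        (rodP k).continuous)))).intervalIntegrable _ _
  rw [intervalIntegral.integral_congr (fun x _ => hexp x),
    intervalIntegral.integral_finset_sum
      (f := fun j x => ∑ k ∈ Finset.Ico N (P+1),
        cP j * cP k * ((rodP j).eval x * (rodP k).eval x)) hInt]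
  refine Finset.sum_congr rfl fun j hj => ?_
  rw [intervalIntegral.integral_finset_sum (fun k _ => (polyII2 _ _).const_mul _)]
  rw [Finset.sum_eq_single_of_mem j hj (fun k _ hkj => by
    rw [intervalIntegral.integral_const_mul, rodP_cross (Ne.symm hkj), mul_zero])]
  rw [intervalIntegral.integral_const_mul, thetaP_diag j]

lemma thetaP_natDegree (N P : ℕ) : (thetaP N P).natDegree ≤ P := by
  rw [thetaP]
  apply Polynomial.natDegree_sum_le_of_forall_le
  intro k hk
  refine le_trans (natDegree_C_mul_le _ _) (le_trans (rodP_natDegree k) ?_)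
  have := Finset.mem_Ico.mp hk
  omega

/-- **Sharpness of the one-dimensional inverse trace inequality.**  For integers
`-1 ≤ n < p` there exists a nonzero real polynomial `θ` of degree at most `p`,
`L²(-1,1)`-orthogonal to every polynomial of degree at most `n` (vacuous when `n = -1`),
such that `|θ(-1)|² = ((p-n)(p+n+2)/2) ⬝ ∫_{-1}^{1} θ(x)² dx`. -/
theorem endpoint_bound_orthogonal_polynomial_sharp
    (p n : ℤ) (hn : -1 ≤ n) (hnp : n < p) :
    ∃ θ : Polynomial ℝ, θ ≠ 0 ∧ (θ.natDegree : ℤ) ≤ p ∧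
      (∀ q : Polynomial ℝ, (q.natDegree : ℤ) ≤ n →
        ∫ x in (-1 : ℝ)..1, θ.eval x * q.eval x = 0) ∧
      (θ.eval (-1)) ^ 2 =
        (((p - n) * (p + n + 2) : ℤ) : ℝ) / 2 *
          ∫ x in (-1 : ℝ)..1, (θ.eval x) ^ 2 := by
  obtain ⟨N, hNcast⟩ : ∃ N : ℕ, (N : ℤ) = n + 1 := ⟨(n+1).toNat, Int.toNat_of_nonneg (by omega)⟩
  obtain ⟨P, hPcast⟩ : ∃ P : ℕ, (P : ℤ) = p := ⟨p.toNat, Int.toNat_of_nonneg (by omega)⟩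
  have hNP : N ≤ P := by omega
  have hsum : ∑ k ∈ Finset.Ico N (P+1), (2*(k:ℝ)+1)/2
      = (((P:ℝ)+1)^2 - (N:ℝ)^2)/2 := by
    rw [← Finset.sum_div, Finset.sum_Ico_eq_sub _ (by omega), sum_odd, sum_odd]
    push_cast
    ring
  have hSpos : (0:ℝ) < ∑ k ∈ Finset.Ico N (P+1), (2*(k:ℝ)+1)/2 := by
    apply Finset.sum_pos
    · intro k _
      positivity
    · exact ⟨N, Finset.mem_Ico.mpr ⟨le_rfl, by omega⟩⟩
  have hcastS : (((p - n) * (p + n + 2) : ℤ) : ℝ) = ((P:ℝ)+1)^2 - (N:ℝ)^2 := by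
    have hz : (p - n) * (p + n + 2) = ((P:ℤ)+1)^2 - (N:ℤ)^2 := by
      rw [hNcast, hPcast]
      ring
    rw [hz]
    push_cast
    ring
  refine ⟨thetaP N P, ?_, ?_, ?_, ?_⟩
  · intro h0
    have := thetaP_eval N P
    rw [h0] at this
    simp at this
    linarith
  · have := thetaP_natDegree N P
    omega
  · intro q hq
    exact thetaP_ortho N P q (by omega)
  · rw [thetaP_eval, thetaP_sq, hcastS, ← hsum]
    ring
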